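/- For every real s>0 and every positive integer n, the sum of the jump rates satisfies Σ_{k=1}^{n} φ_s(k,n) = Σ_{k=1}^{n} 1/(k+2s−1). -/

import Mathlib

/-- The jump rate of the harmonic model with parameter `s`:
`φ_s(k,n) = (1/k)·Γ(n+1)Γ(n−k+2s)/(Γ(n−k+1)Γ(n+2s))` for `1 ≤ k ≤ n`, and `0` otherwise. -/
noncomputable def phiRate (s : ℝ) (k n : ℕ) : ℝ :=
  if 1 ≤ k ∧ k ≤ n then
    (1 / (k : ℝ)) * (Real.Gamma ((n : ℝ) + 1) * Real.Gamma ((n : ℝ) - (k : ℝ) + 2 * s)) /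
      (Real.Gamma ((n : ℝ) - (k : ℝ) + 1) * Real.Gamma ((n : ℝ) + 2 * s))
  else 0

lemma telA (a : ℝ) (ha : 0 < a) (m : ℕ) :
    (a - 1) * ∑ j ∈ Finset.range m, Real.Gamma ((j:ℝ) + a) / Real.Gamma ((j:ℝ) + 2)
      = Real.Gamma ((m:ℝ) + a) / Real.Gamma ((m:ℝ) + 1) - Real.Gamma a := by
  induction m with
  | zero => simp [Real.Gamma_one]
  | succ m ih =>
    rw [Finset.sum_range_succ, mul_add, ih]
    have h1 : Real.Gamma ((m:ℝ) + 1 + a) = ((m:ℝ) + a) * Real.Gamma ((m:ℝ) + a) := by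
      rw [show (m:ℝ) + 1 + a = ((m:ℝ) + a) + 1 by ring, Real.Gamma_add_one (by positivity)]
    have h2 : Real.Gamma ((m:ℝ) + 2) = ((m:ℝ) + 1) * Real.Gamma ((m:ℝ) + 1) := by
      rw [show (m:ℝ) + 2 = ((m:ℝ) + 1) + 1 by ring, Real.Gamma_add_one (by positivity)]
    have g1 : Real.Gamma ((m:ℝ) + a) ≠ 0 := (Real.Gamma_pos_of_pos (by positivity)).ne'
    have g2 : Real.Gamma ((m:ℝ) + 1) ≠ 0 := (Real.Gamma_pos_of_pos (by positivity)).ne'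
    push_cast
    rw [show (m:ℝ) + 1 + 1 = (m:ℝ) + 2 by ring, h1, h2]
    field_simp
    ring

lemma phi_succ (s : ℝ) (hs : 0 < s) (n k : ℕ) (hk1 : 1 ≤ k) (hk2 : k ≤ n) :
    phiRate s k (n+1) = phiRate s k n
      + Real.Gamma ((n:ℝ)+1) / (((n:ℝ) + 2*s) * Real.Gamma ((n:ℝ)+2*s))
        * ((2*s - 1) * (Real.Gamma ((n:ℝ) - (k:ℝ) + 2*s)
            / Real.Gamma ((n:ℝ) - (k:ℝ) + 2))) := by
  unfold phiRate
  rw [if_pos ⟨hk1, le_trans hk2 (Nat.le_succ n)⟩, if_pos ⟨hk1, hk2⟩]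
  have hk : (1:ℝ) ≤ (k:ℝ) := by exact_mod_cast hk1
  have hkn : (k:ℝ) ≤ (n:ℝ) := by exact_mod_cast hk2
  have hnk : (0:ℝ) ≤ (n:ℝ) - (k:ℝ) := by linarith
  push_cast
  have e1 : Real.Gamma ((n:ℝ) + 1 + 1) = ((n:ℝ)+1) * Real.Gamma ((n:ℝ)+1) := by
    rw [Real.Gamma_add_one (by positivity)]
  have e2 : Real.Gamma ((n:ℝ) + 1 - (k:ℝ) + 2*s)
      = ((n:ℝ) - (k:ℝ) + 2*s) * Real.Gamma ((n:ℝ) - (k:ℝ) + 2*s) := by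
    rw [show (n:ℝ) + 1 - (k:ℝ) + 2*s = ((n:ℝ) - (k:ℝ) + 2*s) + 1 by ring,
      Real.Gamma_add_one (by positivity)]
  have e3 : Real.Gamma ((n:ℝ) + 1 - (k:ℝ) + 1)
      = ((n:ℝ) - (k:ℝ) + 1) * Real.Gamma ((n:ℝ) - (k:ℝ) + 1) := by
    rw [show (n:ℝ) + 1 - (k:ℝ) + 1 = ((n:ℝ) - (k:ℝ) + 1) + 1 by ring,
      Real.Gamma_add_one (by positivity)]
  have e4 : Real.Gamma ((n:ℝ) + 1 + 2*s) = ((n:ℝ) + 2*s) * Real.Gamma ((n:ℝ) + 2*s) := by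
    rw [show (n:ℝ) + 1 + 2*s = ((n:ℝ) + 2*s) + 1 by ring,
      Real.Gamma_add_one (by positivity)]
  have e5 : Real.Gamma ((n:ℝ) - (k:ℝ) + 2)
      = ((n:ℝ) - (k:ℝ) + 1) * Real.Gamma ((n:ℝ) - (k:ℝ) + 1) := by
    rw [show (n:ℝ) - (k:ℝ) + 2 = ((n:ℝ) - (k:ℝ) + 1) + 1 by ring,
      Real.Gamma_add_one (by positivity)]
  rw [e1, e2, e3, e4, e5]
  have g1 : Real.Gamma ((n:ℝ)+1) ≠ 0 := (Real.Gamma_pos_of_pos (by positivity)).ne'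
  have g2 : Real.Gamma ((n:ℝ) - (k:ℝ) + 2*s) ≠ 0 := (Real.Gamma_pos_of_pos (by positivity)).ne'
  have g3 : Real.Gamma ((n:ℝ) - (k:ℝ) + 1) ≠ 0 := (Real.Gamma_pos_of_pos (by positivity)).ne'
  have g4 : Real.Gamma ((n:ℝ) + 2*s) ≠ 0 := (Real.Gamma_pos_of_pos (by positivity)).ne'
  have hk0 : (k:ℝ) ≠ 0 := by positivity
  have hns : (n:ℝ) + 2*s ≠ 0 := by positivity
  have hnk1 : (n:ℝ) - (k:ℝ) + 1 ≠ 0 := by positivity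
  field_simp
  ring

/-- For every real `s > 0` and integer `n ≥ 1`,
`Σ_{k=1}^{n} φ_s(k,n) = Σ_{k=1}^{n} 1/(k+2s−1)`. -/
theorem sum_phiRate_eq_sum_shifted_harmonic (s : ℝ) (hs : 0 < s) (n : ℕ) (hn : 1 ≤ n) :
    ∑ k ∈ Finset.Icc 1 n, phiRate s k n
      = ∑ k ∈ Finset.Icc 1 n, 1 / ((k : ℝ) + 2 * s - 1) := by
  induction n, hn using Nat.le_induction with
  | base =>
    simp only [Finset.Icc_self, Finset.sum_singleton]
    unfold phiRate
    rw [if_pos ⟨le_refl 1, le_refl 1⟩]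
    have e1 : Real.Gamma ((1:ℝ) + 2*s) = (2*s) * Real.Gamma (2*s) := by
      rw [show (1:ℝ) + 2*s = 2*s + 1 by ring, Real.Gamma_add_one (by positivity)]
    push_cast
    rw [show (1:ℝ) - 1 + 2*s = 2*s by ring, show (1:ℝ) - 1 + 1 = 1 by ring,
      Real.Gamma_one, show (1:ℝ) + 1 = 2 by norm_num, Real.Gamma_two, e1]
    have g : Real.Gamma (2*s) ≠ 0 := (Real.Gamma_pos_of_pos (by positivity)).ne'
    field_simp
    ring
  | succ n hn ih =>
    have hn1 : 1 ≤ n + 1 := by omega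
    rw [Finset.sum_Icc_succ_top hn1, Finset.sum_Icc_succ_top hn1]
    have hC : ∑ k ∈ Finset.Icc 1 n, phiRate s k (n+1)
        = ∑ k ∈ Finset.Icc 1 n, phiRate s k n
          + Real.Gamma ((n:ℝ)+1) / (((n:ℝ) + 2*s) * Real.Gamma ((n:ℝ)+2*s))
            * ((2*s - 1) * ∑ k ∈ Finset.Icc 1 n,
                Real.Gamma ((n:ℝ) - (k:ℝ) + 2*s) / Real.Gamma ((n:ℝ) - (k:ℝ) + 2)) := by
      rw [Finset.mul_sum, Finset.mul_sum, ← Finset.sum_add_distrib]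
      refine Finset.sum_congr rfl fun k hk => ?_
      obtain ⟨hk1, hk2⟩ := Finset.mem_Icc.mp hk
      exact phi_succ s hs n k hk1 hk2
    have hrei : ∑ k ∈ Finset.Icc 1 n,
        Real.Gamma ((n:ℝ) - (k:ℝ) + 2*s) / Real.Gamma ((n:ℝ) - (k:ℝ) + 2)
        = ∑ j ∈ Finset.range n, Real.Gamma ((j:ℝ) + 2*s) / Real.Gamma ((j:ℝ) + 2) := by
      rw [show Finset.Icc 1 n = Finset.Ico 1 (n+1) from (Finset.Ico_add_one_right_eq_Icc 1 n).symm,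
        Finset.sum_Ico_eq_sum_range]
      simp only [Nat.add_sub_cancel]
      rw [← Finset.sum_range_reflect]
      refine Finset.sum_congr rfl fun i hi => ?_
      have hi' : i < n := Finset.mem_range.mp hi
      have hni : 1 + (n - 1 - i) = n - i := by omega
      rw [hni, Nat.cast_sub hi'.le]
      ring_nf
    rw [hC, hrei]
    have htel := telA (2*s) (by positivity) n
    have hphiTop : phiRate s (n+1) (n+1)
        = Real.Gamma ((n:ℝ)+1) * Real.Gamma (2*s) / (((n:ℝ)+2*s) * Real.Gamma ((n:ℝ)+2*s)) := by
      unfold phiRate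
      rw [if_pos ⟨hn1, le_refl _⟩]
      push_cast
      have f1 : Real.Gamma ((n:ℝ) + 1 + 1) = ((n:ℝ)+1) * Real.Gamma ((n:ℝ)+1) :=
        Real.Gamma_add_one (by positivity)
      have f2 : Real.Gamma ((n:ℝ) + 2*s + 1) = ((n:ℝ)+2*s) * Real.Gamma ((n:ℝ)+2*s) :=
        Real.Gamma_add_one (by positivity)
      rw [show (n:ℝ) + 1 - ((n:ℝ)+1) + 2*s = 2*s by ring,
        show (n:ℝ) + 1 - ((n:ℝ)+1) + 1 = 1 by ring, Real.Gamma_one,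
        show (n:ℝ) + 1 + 2*s = (n:ℝ) + 2*s + 1 by ring, f1, f2]
      have g1 : Real.Gamma ((n:ℝ)+1) ≠ 0 := (Real.Gamma_pos_of_pos (by positivity)).ne'
      have hn0 : ((n:ℝ)+1) ≠ 0 := by positivity
      field_simp
    rw [hphiTop, ih]
    have hsum : Real.Gamma ((n:ℝ)+1) / (((n:ℝ) + 2*s) * Real.Gamma ((n:ℝ)+2*s))
          * ((2*s - 1) * ∑ j ∈ Finset.range n,
              Real.Gamma ((j:ℝ) + 2*s) / Real.Gamma ((j:ℝ) + 2))
        + Real.Gamma ((n:ℝ)+1) * Real.Gamma (2*s) / (((n:ℝ)+2*s) * Real.Gamma ((n:ℝ)+2*s))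
        = 1 / (((n:ℕ)+1 : ℕ) + 2*s - 1) := by
      rw [htel]
      have g1 : Real.Gamma ((n:ℝ)+1) ≠ 0 := (Real.Gamma_pos_of_pos (by positivity)).ne'
      have g4 : Real.Gamma ((n:ℝ) + 2*s) ≠ 0 := (Real.Gamma_pos_of_pos (by positivity)).ne'
      have hns : (n:ℝ) + 2*s ≠ 0 := by positivity
      push_cast
      rw [show (n:ℝ) + 1 + 2*s - 1 = (n:ℝ) + 2*s by ring]
      field_simp
      ring
    push_cast at hsum ⊢
    linarith [hsum]
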